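/- Suppose η : [0,∞) → ℝ is continuously differentiable with both η and η̇ bounded, and φ : [0,T) → ℝ is a solution of φ̇ = 1/(η + φ) - k_c φ with η(0) + φ(0) > 0. Then η(t) + φ(t) does not converge to 0 as t → T; in fact there exists ε > 0 with η(t) + φ(t) ≥ ε for all t ∈ [0,T). -/

import Mathlib

/-- Mode II: if η is C¹ with η and η̇ bounded, and φ solves
φ̇ = 1/(η + φ) - k_c φ on [0,T) with η(0) + φ(0) > 0, then η + φ stays
bounded away from 0 on [0,T). -/
theorem mode_II_no_singularity (kc T : ℝ) (hkc : 0 < kc) (hT : 0 < T)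
    (η φ : ℝ → ℝ)
    (hη : ContDiff ℝ 1 η)
    (hηb : ∃ C : ℝ, ∀ t : ℝ, 0 ≤ t → |η t| ≤ C)
    (hηdb : ∃ C : ℝ, ∀ t : ℝ, 0 ≤ t → |deriv η t| ≤ C)
    (hφ : ∀ t ∈ Set.Ico (0 : ℝ) T,
      HasDerivAt φ (1 / (η t + φ t) - kc * φ t) t)
    (h0 : 0 < η 0 + φ 0) :
    ∃ ε : ℝ, 0 < ε ∧ ∀ t ∈ Set.Ico (0 : ℝ) T, ε ≤ η t + φ t := by
  obtain ⟨C, hC⟩ := hηb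
  obtain ⟨Cd, hCd⟩ := hηdb
  have hC0 : 0 ≤ C := le_trans (abs_nonneg _) (hC 0 le_rfl)
  have hCd0 : 0 ≤ Cd := le_trans (abs_nonneg _) (hCd 0 le_rfl)
  set u : ℝ → ℝ := fun t => η t + φ t with hu
  set M : ℝ := Cd + kc * C + kc + 1 with hM
  have hMpos : 0 < M := by positivity
  set δ : ℝ := min (min ((η 0 + φ 0) / 2) 1) (1 / M) with hδ
  have hδpos : 0 < δ := by
    apply lt_min (lt_min (by linarith) one_pos)
    positivity
  have hδ1 : δ ≤ 1 := le_trans (min_le_left _ _) (min_le_right _ _)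
  have hδM : 1 / δ ≥ M := by
    have h1 : δ ≤ 1 / M := min_le_right _ _
    rw [ge_iff_le, le_div_iff₀ hδpos]
    calc M * δ ≤ M * (1 / M) := by nlinarith
    _ = 1 := by field_simp
  have hδ0 : δ < η 0 + φ 0 := by
    have : δ ≤ (η 0 + φ 0) / 2 := le_trans (min_le_left _ _) (min_le_left _ _)
    linarith
  refine ⟨δ, hδpos, ?_⟩
  by_contra hcon
  push_neg at hcon
  obtain ⟨t₀, ht₀, ht₀lt⟩ := hcon
  obtain ⟨ht₀0, ht₀T⟩ := ht₀
  -- derivative of u at points of [0, T)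
  have hud : ∀ t ∈ Set.Ico (0 : ℝ) T,
      HasDerivAt u (deriv η t + (1 / (η t + φ t) - kc * φ t)) t := by
    intro t ht
    exact ((hη.differentiable one_ne_zero t).hasDerivAt).add (hφ t ht)
  have hucont : ContinuousOn u (Set.Icc 0 t₀) := by
    intro t ht
    exact ((hud t ⟨ht.1, lt_of_le_of_lt ht.2 ht₀T⟩).continuousAt).continuousWithinAt
  set S : Set ℝ := Set.Icc 0 t₀ ∩ u ⁻¹' Set.Iic δ with hS
  have hSne : S.Nonempty := ⟨t₀, ⟨ht₀0, le_rfl⟩, le_of_lt ht₀lt⟩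
  have hSclosed : IsClosed S := hucont.preimage_isClosed_of_isClosed isClosed_Icc isClosed_Iic
  have hSbdd : BddBelow S := ⟨0, fun t ht => ht.1.1⟩
  set t₁ : ℝ := sInf S with ht₁
  have ht₁S : t₁ ∈ S := hSclosed.csInf_mem hSne hSbdd
  have ht₁0 : 0 ≤ t₁ := ht₁S.1.1
  have ht₁t₀ : t₁ ≤ t₀ := ht₁S.1.2
  have ht₁T : t₁ < T := lt_of_le_of_lt ht₁t₀ ht₀T
  have ht₁pos : 0 < t₁ := by
    rcases lt_or_eq_of_le ht₁0 with h | h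
    · exact h
    · exfalso
      have : u 0 ≤ δ := by rw [← h] at ht₁S; exact ht₁S.2
      simp only [hu] at this
      linarith
  -- points strictly before t₁ (in [0,t₀]) have u > δ
  have hbefore : ∀ t, 0 ≤ t → t < t₁ → δ < u t := by
    intro t ht0 htlt
    by_contra hle
    push_neg at hle
    have : t ∈ S := ⟨⟨ht0, le_trans (le_of_lt htlt) ht₁t₀⟩, hle⟩
    exact absurd (csInf_le hSbdd this) (not_le.mpr htlt)
  -- u t₁ = δ
  have hut₁le : u t₁ ≤ δ := ht₁S.2
  have hut₁ge : δ ≤ u t₁ := by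
    have hcontAt : ContinuousAt u t₁ := (hud t₁ ⟨ht₁0, ht₁T⟩).continuousAt
    have htend : Filter.Tendsto u (nhdsWithin t₁ (Set.Iio t₁)) (nhds (u t₁)) :=
      hcontAt.continuousWithinAt.tendsto
    refine ge_of_tendsto htend ?_
    filter_upwards [Ioo_mem_nhdsLT_of_mem (Set.mem_Ioc.mpr ⟨ht₁pos, le_rfl⟩)] with t ht
    exact le_of_lt (hbefore t (le_of_lt ht.1) ht.2)
  have hut₁ : u t₁ = δ := le_antisymm hut₁le hut₁ge
  -- derivative at t₁ is ≥ 1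
  have hd : HasDerivAt u (deriv η t₁ + (1 / (η t₁ + φ t₁) - kc * φ t₁)) t₁ :=
    hud t₁ ⟨ht₁0, ht₁T⟩
  have hsum : η t₁ + φ t₁ = δ := hut₁
  have hφbound : |φ t₁| ≤ δ + C := by
    have h1 : |η t₁| ≤ C := hC t₁ ht₁0
    have h2 : φ t₁ = (η t₁ + φ t₁) - η t₁ := by ring
    rw [h2, hsum]
    calc |δ - η t₁| ≤ |δ| + |η t₁| := abs_sub _ _
    _ ≤ δ + C := by rw [abs_of_pos hδpos]; linarith
  have hdpos : 1 ≤ deriv η t₁ + (1 / (η t₁ + φ t₁) - kc * φ t₁) := by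
    rw [hsum]
    have h1 : -Cd ≤ deriv η t₁ := neg_le_of_abs_le (hCd t₁ ht₁0)
    have h2 : kc * φ t₁ ≤ kc * (δ + C) := by
      have := le_of_abs_le hφbound
      nlinarith
    have h3 : Cd + kc * C + kc + 1 ≤ 1 / δ := hδM
    have h4 : kc * δ ≤ kc := by nlinarith
    linarith
  -- slope argument: derivative positive but u t < u t₁ fails for t < t₁
  have hslope := hasDerivAt_iff_tendsto_slope.mp hd
  have hslope' : Filter.Tendsto (slope u t₁) (nhdsWithin t₁ (Set.Iio t₁))
      (nhds (deriv η t₁ + (1 / (η t₁ + φ t₁) - kc * φ t₁))) :=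
    hslope.mono_left (nhdsWithin_mono _ (fun x hx => Set.mem_compl_singleton_iff.mpr (ne_of_lt hx)))
  have hev : ∀ᶠ t in nhdsWithin t₁ (Set.Iio t₁), 0 < slope u t₁ t :=
    hslope'.eventually (eventually_gt_nhds (by linarith))
  have hev2 : (Set.Ioo (0:ℝ) t₁) ∈ nhdsWithin t₁ (Set.Iio t₁) :=
    Ioo_mem_nhdsLT_of_mem (Set.mem_Ioc.mpr ⟨ht₁pos, le_rfl⟩)
  have : ∃ t, 0 < slope u t₁ t ∧ t ∈ Set.Ioo (0:ℝ) t₁ := by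
    have hne : (nhdsWithin t₁ (Set.Iio t₁)).NeBot := nhdsLT_neBot t₁
    exact (hev.and (Filter.eventually_of_mem hev2 (fun t ht => ht))).exists
  obtain ⟨t, hslopet, ht0, htlt⟩ := this
  have hutgt : δ < u t := hbefore t (le_of_lt ht0) htlt
  -- but slope > 0 and t < t₁ forces u t < u t₁ = δ
  rw [slope_def_field] at hslopet
  have hden : t - t₁ < 0 := by linarith
  have : u t - u t₁ < 0 := by
    by_contra hge
    push_neg at hge
    have : (u t - u t₁) / (t - t₁) ≤ 0 := div_nonpos_of_nonneg_of_nonpos hge (le_of_lt hden)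
    linarith
  rw [hut₁] at this
  linarith
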